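/- Let K be a finite Eulerian poset with rank function ρ and P ≠ id_K a special projection. Then the induced subposet (K \ im(P)) ∪ {0̂} is graded with rank function ρ. -/

import Mathlib

open scoped Classical

/-- A special matching of a poset. -/
def IsSpecialMatching {K : Type*} [PartialOrder K] (M : K → K) : Prop :=
  (∀ x, M (M x) = x) ∧ (∀ x, M x ⋖ x ∨ x ⋖ M x) ∧
    (∀ x y : K, x ⋖ y → x ≠ M y → M x ≤ M y)

/-- The idempotent `P^M` associated with a special matching `M`. -/
noncomputable def PMmap {K : Type*} [PartialOrder K] (M : K → K) : K → K :=
  fun x => if M x ⋖ x then M x else x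

/-- The monoid `M^K ⊆ Or(K)` generated by the idempotents `P^M` for special
matchings `M` of `K`. -/
def specialMonoid (K : Type*) [PartialOrder K] : Submonoid (Function.End K) :=
  Submonoid.closure {f : Function.End K | ∃ M : K → K, IsSpecialMatching M ∧ f = PMmap M}

section Aux

variable {K : Type*} [PartialOrder K] [Fintype K]

/-- Strict monotonicity of a rank function. -/
lemma aux_rank_strictMono (ρ : K → ℕ) (hρ : ∀ x y : K, x ⋖ y → ρ y = ρ x + 1) :
    ∀ x y : K, x < y → ρ x < ρ y := by
  have : WellFoundedLT K := Finite.to_wellFoundedLT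
  intro x y
  induction y using WellFoundedLT.induction with
  | ind y IH =>
    intro hxy
    obtain ⟨z, hz, hzmax⟩ : ∃ z ∈ Finset.univ.filter (fun t => x ≤ t ∧ t < y), ∀ c ∈ Finset.univ.filter (fun t => x ≤ t ∧ t < y), ¬ z < c := (Finset.exists_maximal (s :=
      (Finset.univ.filter (fun t => x ≤ t ∧ t < y))) ⟨x, by simp [hxy]⟩).imp
      fun z hz => ⟨hz.1, fun c hc hlt => hlt.not_ge (hz.2 hc hlt.le)⟩
    simp only [Finset.mem_filter, Finset.mem_univ, true_and] at hz
    have hzy : z ⋖ y := by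
      refine ⟨hz.2, fun c hzc hcy => ?_⟩
      exact hzmax c (by simp [le_trans hz.1 hzc.le, hcy]) hzc
    have hρy := hρ z y hzy
    rcases eq_or_lt_of_le hz.1 with h | h
    · subst h; omega
    · have := IH z hz.2 h
      omega

lemma aux_exists_coatom (x y : K) (hxy : x < y) : ∃ z, x ≤ z ∧ z ⋖ y := by
  obtain ⟨z, hz, hzmax⟩ : ∃ z ∈ Finset.univ.filter (fun t => x ≤ t ∧ t < y), ∀ c ∈ Finset.univ.filter (fun t => x ≤ t ∧ t < y), ¬ z < c := (Finset.exists_maximal (s :=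
    (Finset.univ.filter (fun t => x ≤ t ∧ t < y))) ⟨x, by simp [hxy]⟩).imp
    fun z hz => ⟨hz.1, fun c hc hlt => hlt.not_ge (hz.2 hc hlt.le)⟩
  simp only [Finset.mem_filter, Finset.mem_univ, true_and] at hz
  exact ⟨z, hz.1, hz.2, fun c hzc hcy =>
    hzmax c (by simp [le_trans hz.1 hzc.le, hcy]) hzc⟩

/-- Every element of the special monoid is regular and, if not the identity,
moves the top element down. -/
lemma aux_monoid [OrderTop K] (Q : Function.End K) (hQ : Q ∈ specialMonoid K) :
    (∀ x, Q x ≤ x) ∧ ((Q : K → K) = id ∨ Q ⊤ < ⊤) := by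
  refine Submonoid.closure_induction (fun f hf => ?_) ?_ (fun f g _ _ hf hg => ?_) hQ
  · obtain ⟨M, hM, rfl⟩ := hf
    constructor
    · intro x
      unfold PMmap
      split
      · exact le_of_lt (by assumption : M x ⋖ x).lt
      · exact le_rfl
    · right
      have hMt : M ⊤ ⋖ ⊤ := by
        rcases hM.2.1 ⊤ with h | h
        · exact h
        · exact absurd h.lt (not_top_lt)
      unfold PMmap
      simpa [hMt] using hMt.lt
  · exact ⟨fun x => le_rfl, Or.inl rfl⟩
  · refine ⟨fun x => le_trans (hf.1 (g x)) (hg.1 x), ?_⟩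
    rcases hg.2 with hgid | hgt
    · rcases hf.2 with hfid | hft
      · left
        funext x
        show f (g x) = x
        simp [show g x = x from congrFun hgid x, show ∀ t, f t = t from fun t => congrFun hfid t]
      · right
        show f (g ⊤) < ⊤
        rw [show g ⊤ = ⊤ from congrFun hgid ⊤]
        exact hft
    · right
      exact lt_of_le_of_lt (hf.1 (g ⊤)) hgt

end Aux

/-- Let `K` be a finite Eulerian poset with rank function `ρ` and
`P ≠ id` a special projection. Then the induced subposet `(K \ im(P)) ∪ {⊥}` is graded
with rank function `ρ`: it contains `⊥` as minimum, has maximum `⊤`, and any `u < v`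
in it with `ρ v - ρ u > 1` admit `z` in it with `u ≤ z ⋖ v`. -/
theorem stmt_15 {K : Type*} [PartialOrder K] [Fintype K] [OrderBot K] [OrderTop K]
    (ρ : K → ℕ) (hρbot : ρ ⊥ = 0) (hρ : ∀ x y : K, x ⋖ y → ρ y = ρ x + 1)
    (μK : K → K → ℤ)
    (hμK1 : ∀ x : K, μK x x = 1)
    (hμK2 : ∀ x y : K, x < y →
      μK x y = -∑ z ∈ Finset.univ.filter (fun z => x ≤ z ∧ z < y), μK x z)
    (hμK3 : ∀ x y : K, ¬ x ≤ y → μK x y = 0)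
    (hEuler : ∀ x y : K, x ≤ y → μK x y = (-1) ^ (ρ y - ρ x))
    (P : Function.End K) (hmem : P ∈ specialMonoid K) (hidem : P * P = P)
    (hreg : ∀ x : K, P x ≤ x) (hmono : Monotone (P : K → K))
    (hproj : ∀ x ∈ Set.range (P : K → K), ∀ y ∈ Set.range (P : K → K), x ≤ y →
      ∃ a b : K, {z : K | x ≤ z ∧ z ≤ y ∧ P z = x} = Set.Icc a b)
    (hne : (P : K → K) ≠ id)
    (C : Set K) (hC : C = (Set.range (P : K → K))ᶜ ∪ {⊥}) :
    (⊤ ∈ C) ∧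
    (∀ u ∈ C, ∀ v ∈ C, u < v → 1 < ρ v - ρ u → ∃ z ∈ C, u ≤ z ∧ z ⋖ v) := by
  have hsm := aux_rank_strictMono ρ hρ
  have hfix : ∀ x : K, P (P x) = P x := fun x => congrFun hidem x
  have hrange : ∀ x : K, x ∈ Set.range (P : K → K) → P x = x := by
    rintro x ⟨y, rfl⟩; exact hfix y
  have htopC : (⊤ : K) ∈ C := by
    have := (aux_monoid P hmem).2
    rcases this with h | h
    · exact absurd h hne
    · rw [hC]
      left
      intro hmemtop
      have := hrange ⊤ hmemtop
      exact absurd this (ne_of_lt h)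
  refine ⟨htopC, ?_⟩
  intro u hu v hv huv hgap
  by_contra hcon
  push_neg at hcon
  -- every coatom of [u,v] is a fixed point of P and not ⊥
  have hvnran : v ∉ Set.range (P : K → K) := by
    rw [hC] at hv
    rcases hv with h | h
    · exact h
    · simp only [Set.mem_singleton_iff] at h
      subst h
      exact absurd huv (by simp)
  have hPvlt : P v < v := lt_of_le_of_ne (hreg v) (fun h => hvnran ⟨v, h⟩)
  have huniq : ∀ w, u ≤ w → w ⋖ v → w = P v := by
    intro w huw hwv
    have hwC : w ∉ C := fun hwC => hcon w hwC huw hwv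
    have hwran : w ∈ Set.range (P : K → K) := by
      rw [hC] at hwC
      by_contra h
      exact hwC (Or.inl h)
    have h1 : w ≤ P v := by
      have := hmono hwv.le
      rwa [hrange w hwran] at this
    rcases eq_or_lt_of_le h1 with h | h
    · exact h
    · exact absurd hPvlt (hwv.2 h)
  obtain ⟨z, huz, hzv⟩ := aux_exists_coatom u v huv
  have hz : z = P v := huniq z huz hzv
  have hρz : ρ v = ρ z + 1 := hρ z v hzv
  have huzlt : u < z := by
    rcases eq_or_lt_of_le huz with h | h
    · subst h; omega
    · exact h
  obtain ⟨z', huz', hz'z⟩ := aux_exists_coatom u z huzlt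
  have hρz' : ρ z = ρ z' + 1 := hρ z' z hz'z
  -- the interval [z', v] has exactly z', z below v
  have hset : Finset.univ.filter (fun w => z' ≤ w ∧ w < v) = {z', z} := by
    ext w
    simp only [Finset.mem_filter, Finset.mem_univ, true_and, Finset.mem_insert,
      Finset.mem_singleton]
    constructor
    · rintro ⟨h1, h2⟩
      rcases eq_or_lt_of_le h1 with h | h
      · exact Or.inl h.symm
      · right
        have hw1 := hsm z' w h
        have hw2 := hsm w v h2
        have hwv : w ⋖ v := by
          refine ⟨h2, fun c hwc hcv => ?_⟩
          have := hsm w c hwc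
          have := hsm c v hcv
          omega
        exact (huniq w (le_trans huz' h.le) hwv).trans hz.symm
    · rintro (rfl | rfl)
      · exact ⟨le_rfl, lt_trans hz'z.lt hzv.lt⟩
      · exact ⟨hz'z.lt.le, hzv.lt⟩
  have hz'v : z' < v := lt_trans hz'z.lt hzv.lt
  have hne' : z' ≠ z := ne_of_lt hz'z.lt
  have hsum : μK z' v = -(μK z' z' + μK z' z) := by
    rw [hμK2 z' v hz'v, hset, Finset.sum_insert (by simpa using hne'), Finset.sum_singleton]
  have h1 : μK z' z' = 1 := hμK1 z'
  have h2 : μK z' z = -1 := by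
    rw [hEuler z' z hz'z.lt.le]
    have : ρ z - ρ z' = 1 := by omega
    rw [this]; ring
  have h3 : μK z' v = 1 := by
    rw [hEuler z' v hz'v.le]
    have : ρ v - ρ z' = 2 := by omega
    rw [this]; ring
  rw [h1, h2, h3] at hsum
  norm_num at hsum
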